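/- Greedy online coloring correctness: Suppose points on a line are colored with colors from a palette of size 2k−1 such that whenever a new point p arrives, it receives a color not used by any of the k−1 nearest present points to its left nor the k−1 nearest present points to its right. Then such a color always exists, and at every time, every set of at most k consecutive present points has pairwise distinct colors. -/
import Mathlib


open scoped Classical

/-- `j` is one of the `k - 1` nearest points to the left of `i` among the
points arrived before `i`: `x j < x i` and fewer than `k - 1` earlier points
lie strictly between them. -/
def NearLeft {n : ℕ} (x : Fin n → ℝ) (k : ℕ) (i j : Fin n) : Prop :=
  (j : ℕ) < (i : ℕ) ∧ x j < x i ∧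
    (Finset.univ.filter
      (fun m : Fin n => (m : ℕ) < (i : ℕ) ∧ x j < x m ∧ x m < x i)).card < k - 1

/-- `j` is one of the `k - 1` nearest points to the right of `i` among the
points arrived before `i`. -/
def NearRight {n : ℕ} (x : Fin n → ℝ) (k : ℕ) (i j : Fin n) : Prop :=
  (j : ℕ) < (i : ℕ) ∧ x i < x j ∧
    (Finset.univ.filter
      (fun m : Fin n => (m : ℕ) < (i : ℕ) ∧ x i < x m ∧ x m < x j)).card < k - 1

/-- `C` is a set of consecutive points among the points arrived before time `t`. -/
def ConsecPrefix {n : ℕ} (x : Fin n → ℝ) (t : ℕ) (C : Finset (Fin n)) : Prop :=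
  (∀ i ∈ C, (i : ℕ) < t) ∧
  ∀ i ∈ C, ∀ j ∈ C, ∀ m : Fin n, (m : ℕ) < t → x i ≤ x m → x m ≤ x j → m ∈ C

lemma nearLeft_card_le {n k : ℕ} (x : Fin n → ℝ) (hx : Function.Injective x) (i : Fin n) :
    (Finset.univ.filter (fun j => NearLeft x k i j)).card ≤ k - 1 := by
  set L := Finset.univ.filter (fun j => NearLeft x k i j) with hL
  rcases L.eq_empty_or_nonempty with h | h
  · simp [h]
  · obtain ⟨j₀, hj₀, hmin⟩ := L.exists_min_image x h
    have hj₀' : NearLeft x k i j₀ := by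
      simpa [hL] using hj₀
    have hsub : L.erase j₀ ⊆ Finset.univ.filter
        (fun m : Fin n => (m : ℕ) < (i : ℕ) ∧ x j₀ < x m ∧ x m < x i) := by
      intro j hj
      obtain ⟨hne, hjL⟩ := Finset.mem_erase.mp hj
      have hjn : NearLeft x k i j := by simpa [hL] using hjL
      simp only [Finset.mem_filter, Finset.mem_univ, true_and]
      refine ⟨hjn.1, ?_, hjn.2.1⟩
      rcases lt_or_eq_of_le (hmin j hjL) with h' | h'
      · exact h'
      · exact absurd (hx h').symm hne
    have h1 : (L.erase j₀).card < k - 1 :=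
      lt_of_le_of_lt (Finset.card_le_card hsub) hj₀'.2.2
    have h2 : (L.erase j₀).card + 1 = L.card := Finset.card_erase_add_one hj₀
    omega

lemma nearRight_card_le {n k : ℕ} (x : Fin n → ℝ) (hx : Function.Injective x) (i : Fin n) :
    (Finset.univ.filter (fun j => NearRight x k i j)).card ≤ k - 1 := by
  set L := Finset.univ.filter (fun j => NearRight x k i j) with hL
  rcases L.eq_empty_or_nonempty with h | h
  · simp [h]
  · obtain ⟨j₀, hj₀, hmax⟩ := L.exists_max_image x h
    have hj₀' : NearRight x k i j₀ := by
      simpa [hL] using hj₀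
    have hsub : L.erase j₀ ⊆ Finset.univ.filter
        (fun m : Fin n => (m : ℕ) < (i : ℕ) ∧ x i < x m ∧ x m < x j₀) := by
      intro j hj
      obtain ⟨hne, hjL⟩ := Finset.mem_erase.mp hj
      have hjn : NearRight x k i j := by simpa [hL] using hjL
      simp only [Finset.mem_filter, Finset.mem_univ, true_and]
      refine ⟨hjn.1, hjn.2.1, ?_⟩
      rcases lt_or_eq_of_le (hmax j hjL) with h' | h'
      · exact h'
      · exact absurd (hx h') hne
    have h1 : (L.erase j₀).card < k - 1 :=
      lt_of_le_of_lt (Finset.card_le_card hsub) hj₀'.2.2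
    have h2 : (L.erase j₀).card + 1 = L.card := Finset.card_erase_add_one hj₀
    omega

lemma near_of_consec {n k t : ℕ} (x : Fin n → ℝ) (hx : Function.Injective x)
    (C : Finset (Fin n)) (hC : ConsecPrefix x t C) (hCk : C.card ≤ k)
    (i j : Fin n) (hi : i ∈ C) (hj : j ∈ C) (hji : (j : ℕ) < (i : ℕ)) :
    NearLeft x k i j ∨ NearRight x k i j := by
  have hij : i ≠ j := by
    intro h; rw [h] at hji; omega
  have hk2 : 2 ≤ k := by
    have : 2 ≤ C.card := Finset.one_lt_card.mpr ⟨i, hi, j, hj, hij⟩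
    omega
  have hxne : x i ≠ x j := fun h => hij (hx h)
  rcases hxne.lt_or_gt with hlt | hlt
  · -- x i < x j : NearRight
    right
    refine ⟨hji, hlt, ?_⟩
    have hsub : Finset.univ.filter
        (fun m : Fin n => (m : ℕ) < (i : ℕ) ∧ x i < x m ∧ x m < x j)
        ⊆ (C.erase i).erase j := by
      intro m hm
      simp only [Finset.mem_filter, Finset.mem_univ, true_and] at hm
      obtain ⟨hmi, h1, h2⟩ := hm
      have hmt : (m : ℕ) < t := lt_trans hmi (hC.1 i hi)
      have hmC : m ∈ C := hC.2 i hi j hj m hmt (le_of_lt h1) (le_of_lt h2)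
      refine Finset.mem_erase.mpr ⟨fun h => absurd h2 (by rw [h]; exact lt_irrefl _), ?_⟩
      exact Finset.mem_erase.mpr ⟨fun h => absurd h1 (by rw [h]; exact lt_irrefl _), hmC⟩
    have hc1 : ((C.erase i).erase j).card + 1 = (C.erase i).card :=
      Finset.card_erase_add_one (Finset.mem_erase.mpr ⟨fun h => hij h.symm, hj⟩)
    have hc2 : (C.erase i).card + 1 = C.card := Finset.card_erase_add_one hi
    have := Finset.card_le_card hsub
    omega
  · left
    refine ⟨hji, hlt, ?_⟩
    have hsub : Finset.univ.filter
        (fun m : Fin n => (m : ℕ) < (i : ℕ) ∧ x j < x m ∧ x m < x i)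
        ⊆ (C.erase i).erase j := by
      intro m hm
      simp only [Finset.mem_filter, Finset.mem_univ, true_and] at hm
      obtain ⟨hmi, h1, h2⟩ := hm
      have hmt : (m : ℕ) < t := lt_trans hmi (hC.1 i hi)
      have hmC : m ∈ C := hC.2 j hj i hi m hmt (le_of_lt h1) (le_of_lt h2)
      refine Finset.mem_erase.mpr ⟨fun h => absurd h1 (by rw [h]; exact lt_irrefl _), ?_⟩
      exact Finset.mem_erase.mpr ⟨fun h => absurd h2 (by rw [h]; exact lt_irrefl _), hmC⟩
    have hc1 : ((C.erase i).erase j).card + 1 = (C.erase i).card :=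
      Finset.card_erase_add_one (Finset.mem_erase.mpr ⟨fun h => hij h.symm, hj⟩)
    have hc2 : (C.erase i).card + 1 = C.card := Finset.card_erase_add_one hi
    have := Finset.card_le_card hsub
    omega

/-- Greedy online coloring correctness: with a palette of `2k - 1` colors,
(1) for every arriving point there is always a color avoiding the colors of
the `k - 1` nearest present points on each side, and (2) if every point is
colored avoiding the colors of its `k - 1` nearest present neighbours on each
side, then at every time every set of at most `k` consecutive present points
has pairwise distinct colors. -/
theorem greedy_online_coloring_correct (k : ℕ) (hk : 1 ≤ k)
    (n : ℕ) (x : Fin n → ℝ) (hx : Function.Injective x)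
    (χ : Fin n → Fin (2 * k - 1)) :
    (∀ i : Fin n, ∃ c : Fin (2 * k - 1), ∀ j : Fin n,
        NearLeft x k i j ∨ NearRight x k i j → χ j ≠ c) ∧
    ((∀ i j : Fin n, NearLeft x k i j ∨ NearRight x k i j → χ j ≠ χ i) →
      ∀ t : ℕ, t ≤ n → ∀ C : Finset (Fin n), ConsecPrefix x t C →
        C.card ≤ k → ∀ i ∈ C, ∀ j ∈ C, i ≠ j → χ i ≠ χ j) := by
  constructor
  · intro i
    by_contra hcon
    push_neg at hcon
    set F := (Finset.univ.filter
      (fun j => NearLeft x k i j ∨ NearRight x k i j)).image χ with hF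
    have huniv : (Finset.univ : Finset (Fin (2 * k - 1))) ⊆ F := by
      intro c _
      obtain ⟨j, hj1, hj2⟩ := hcon c
      exact Finset.mem_image.mpr ⟨j, by simp [hj1], hj2⟩
    have h1 : (2 * k - 1) ≤ F.card := by
      have := Finset.card_le_card huniv
      simpa using this
    have h2 : F.card ≤ (Finset.univ.filter
        (fun j => NearLeft x k i j ∨ NearRight x k i j)).card :=
      Finset.card_image_le
    have h3 : (Finset.univ.filter (fun j => NearLeft x k i j ∨ NearRight x k i j))
        ⊆ (Finset.univ.filter (fun j => NearLeft x k i j)) ∪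
          (Finset.univ.filter (fun j => NearRight x k i j)) := by
      intro j hj
      simp only [Finset.mem_filter, Finset.mem_univ, true_and] at hj
      rcases hj with h | h
      · exact Finset.mem_union_left _ (by simp [h])
      · exact Finset.mem_union_right _ (by simp [h])
    have h4 := Finset.card_le_card h3
    have h5 := Finset.card_union_le
      (Finset.univ.filter (fun j => NearLeft x k i j))
      (Finset.univ.filter (fun j => NearRight x k i j))
    have h6 := nearLeft_card_le (k := k) x hx i
    have h7 := nearRight_card_le (k := k) x hx i
    omega
  · intro hχ t ht C hC hCk i hi j hj hij
    rcases Nat.lt_or_ge (j : ℕ) (i : ℕ) with h | h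
    · exact fun hc => hχ i j (near_of_consec x hx C hC hCk i j hi hj h) hc.symm
    · have h' : (i : ℕ) < (j : ℕ) := by
        rcases Nat.lt_or_ge (i : ℕ) (j : ℕ) with h' | h'
        · exact h'
        · exact absurd (Fin.ext (le_antisymm h' h)).symm hij
      exact hχ j i (near_of_consec x hx C hC hCk j i hj hi h')
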